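/- The elements u_1, …, u_m of M_n(ℂ)^{⊗(m+1)} are unitary, pairwise commute (u_s · u_t = u_t · u_s for all s, t), and satisfy u_s^n = 1 for every s = 1,…,m. -/

import Mathlib

open Matrix Kronecker

noncomputable section

/-- The primitive `n`-th root of unity `exp(2πi/n)`. -/
def omega (n : ℕ) : ℂ := Complex.exp (2 * Real.pi * Complex.I / n)

/-- The diagonal matrix unit `e_i` with a `1` in entry `(i,i)`. -/
def eM (n : ℕ) (i : Fin n) : Matrix (Fin n) (Fin n) ℂ := Matrix.single i i 1

/-- The cyclic shift matrix `w`, with `w(a,b) = 1` iff `b = a + 1` (mod `n`). -/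
def wM (n : ℕ) [NeZero n] : Matrix (Fin n) (Fin n) ℂ :=
  Matrix.of fun a b => if b = a + 1 then 1 else 0

/-- The spectral projections `f_k = (1/n) Σ_j ω^{-jk} w^j` of `w`. -/
def fM (n : ℕ) [NeZero n] (k : Fin n) : Matrix (Fin n) (Fin n) ℂ :=
  ((n : ℂ))⁻¹ • ∑ j : Fin n, (omega n ^ ((j : ℕ) * (k : ℕ)))⁻¹ • wM n ^ (j : ℕ)

/-- The normalized trace of a square matrix: the trace divided by the size. -/
def nτ {ι : Type*} [Fintype ι] (A : Matrix ι ι ℂ) : ℂ :=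
  Matrix.trace A / (Fintype.card ι)

/-- The `N`-fold elementary tensor `A_0 ⊗ ⋯ ⊗ A_{N-1}` of `n × n` matrices,
realized as a matrix indexed by functions `Fin N → Fin n`. -/
def tens (n N : ℕ) (A : Fin N → Matrix (Fin n) (Fin n) ℂ) :
    Matrix (Fin N → Fin n) (Fin N → Fin n) ℂ :=
  Matrix.of fun x y => ∏ k, A k (x k) (y k)

/-- `u_s = 1^{⊗(s-1)} ⊗ v ⊗ 1^{⊗…}` where `v = Σ_i w^i ⊗ f_i` occupies factors
`s-1` and `s` of the `N`-fold tensor power. -/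
def uM (n N : ℕ) [NeZero n] (s : ℕ) : Matrix (Fin N → Fin n) (Fin N → Fin n) ℂ :=
  ∑ i : Fin n, tens n N fun k =>
    if (k : ℕ) + 1 = s then wM n ^ (i : ℕ)
    else if (k : ℕ) = s then fM n i
    else 1

/-- `U_m = u_1 u_2 ⋯ u_m` inside the `N`-fold tensor power. -/
def UM (n N m : ℕ) [NeZero n] : Matrix (Fin N → Fin n) (Fin N → Fin n) ℂ :=
  (((List.range m).map fun s => uM n N (s + 1))).prod

/-- `F_r = f_r ⊗ 1 ⊗ ⋯ ⊗ 1` inside the `N`-fold tensor power. -/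
def FM (n N : ℕ) [NeZero n] (r : Fin n) : Matrix (Fin N → Fin n) (Fin N → Fin n) ℂ :=
  tens n N fun k => if (k : ℕ) = 0 then fM n r else 1

/-- `E(i) = e_{i_1} ⊗ ⋯ ⊗ e_{i_m} ⊗ 1 ⊗ ⋯ ⊗ 1` inside the `N`-fold tensor power,
with the `e`'s occupying factors `0, …, m-1`. -/
def EM (n N m : ℕ) (i : Fin m → Fin n) : Matrix (Fin N → Fin n) (Fin N → Fin n) ℂ :=
  tens n N fun k => if h : (k : ℕ) < m then eM n (i ⟨(k : ℕ), h⟩) else 1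

namespace S13

variable (n : ℕ) [NeZero n]

open scoped Fin.NatCast

def WW (c : Fin n) : Matrix (Fin n) (Fin n) ℂ :=
  Matrix.of fun a b => if b = a + c then 1 else 0

lemma WW_zero : WW n 0 = 1 := by
  ext a b; simp [WW, Matrix.one_apply, eq_comm]

lemma WW_mul (c d : Fin n) : WW n c * WW n d = WW n (c + d) := by
  ext a b
  simp only [WW, Matrix.mul_apply, Matrix.of_apply, ite_mul, one_mul, zero_mul]
  rw [Finset.sum_ite_eq' Finset.univ (a + c)]
  simp [add_assoc]

lemma wM_pow (j : ℕ) : wM n ^ j = WW n (j : Fin n) := by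
  induction j with
  | zero => simpa using (WW_zero n).symm
  | succ p ih =>
      rw [pow_succ, ih]
      have : wM n = WW n 1 := rfl
      rw [this, WW_mul]
      congr 1
      push_cast
      rfl

lemma WW_conjT (c : Fin n) : (WW n c)ᴴ = WW n (-c) := by
  ext a b
  have h : (a = b + c) ↔ (b = a + -c) := by
    constructor <;> intro h <;> subst h <;> simp
  simp only [Matrix.conjTranspose_apply, WW, Matrix.of_apply, h]
  split_ifs <;> simp

lemma omega_prim : IsPrimitiveRoot (omega n) n :=
  Complex.isPrimitiveRoot_exp n (NeZero.ne n)

lemma omega_pow_n : omega n ^ n = 1 := (omega_prim n).pow_eq_one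

lemma omega_ne_zero : omega n ≠ 0 := Complex.exp_ne_zero _

lemma root_pow_mod (z : ℂ) (hz : z ^ n = 1) (a : ℕ) : z ^ a = z ^ (a % n) := by
  conv_lhs => rw [← Nat.div_add_mod a n]
  rw [pow_add, pow_mul, hz, one_pow, one_mul]

lemma root_pow_val_add (z : ℂ) (hz : z ^ n = 1) (a b : Fin n) :
    z ^ ((a + b : Fin n) : ℕ) = z ^ (a : ℕ) * z ^ (b : ℕ) := by
  rw [Fin.val_add, ← root_pow_mod n z hz, pow_add]

lemma sum_root (z : ℂ) (hz : z ^ n = 1) :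
    ∑ k : Fin n, z ^ (k : ℕ) = if z = 1 then (n : ℂ) else 0 := by
  rw [Fin.sum_univ_eq_sum_range]
  split_ifs with h
  · simp [h]
  · rw [geom_sum_eq h, hz]; simp

lemma zeta_pow_n (k : Fin n) : (omega n ^ (k : ℕ)) ^ n = 1 := by
  rw [← pow_mul, mul_comm, pow_mul, omega_pow_n, one_pow]

lemma fM_eq (k : Fin n) :
    fM n k = (n : ℂ)⁻¹ • ∑ j : Fin n, ((omega n ^ (k : ℕ)) ^ (j : ℕ))⁻¹ • WW n j := by
  unfold fM
  congr 1
  refine Finset.sum_congr rfl fun j _ => ?_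
  rw [wM_pow, Fin.cast_val_eq_self, ← pow_mul, mul_comm (j : ℕ)]

lemma omega_conj : (starRingEnd ℂ) (omega n) = (omega n)⁻¹ := by
  rw [omega, ← Complex.exp_conj, ← Complex.exp_neg]
  congr 1
  simp [map_div₀, Complex.conj_I, map_ofNat, Complex.conj_ofReal]
  ring

lemma w_mul_fM (hn : 2 ≤ n) (k : Fin n) :
    wM n * fM n k = (omega n ^ (k : ℕ)) • fM n k := by
  set ζ := omega n ^ (k : ℕ) with hζ
  have hζn : ζ ^ n = 1 := zeta_pow_n n k
  have hζ0 : ζ ≠ 0 := pow_ne_zero _ (omega_ne_zero n)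
  have hone : ((1 : Fin n) : ℕ) = 1 := by
    have h1n : (1 : ℕ) % n = 1 := Nat.mod_eq_of_lt (by omega)
    rw [Fin.val_one' n, h1n]
  have key : ∀ j : Fin n, ζ • ((ζ ^ (j : ℕ))⁻¹ • WW n j)
      = (ζ ^ (((-1 : Fin n) + j : Fin n) : ℕ))⁻¹ • WW n j := by
    intro j
    rw [smul_smul]
    congr 1
    have h2 : ζ ^ (j : ℕ) = ζ ^ (((-1 : Fin n) + j : Fin n) : ℕ) * ζ := by
      have := root_pow_val_add n ζ hζn (-1 + j) 1
      rw [hone, pow_one] at this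
      rw [← this]
      norm_num
    rw [h2]
    field_simp
  have S : ∑ j : Fin n, wM n * ((ζ ^ (j : ℕ))⁻¹ • WW n j)
      = ∑ j : Fin n, ζ • ((ζ ^ (j : ℕ))⁻¹ • WW n j) := by
    calc ∑ j : Fin n, wM n * ((ζ ^ (j : ℕ))⁻¹ • WW n j)
        = ∑ j : Fin n, (ζ ^ (j : ℕ))⁻¹ • WW n (1 + j) := by
          refine Finset.sum_congr rfl fun j _ => ?_
          rw [Matrix.mul_smul]
          congr 1
          have hw : wM n = WW n 1 := rfl
          rw [hw, WW_mul]
      _ = ∑ j : Fin n, (ζ ^ (((-1 : Fin n) + j : Fin n) : ℕ))⁻¹ • WW n j := by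
          refine Fintype.sum_equiv (Equiv.addLeft (1 : Fin n)) _ _ fun j => ?_
          simp only [Equiv.coe_addLeft]
          congr 2
          rw [neg_add_cancel_left]
      _ = ∑ j : Fin n, ζ • ((ζ ^ (j : ℕ))⁻¹ • WW n j) :=
          Finset.sum_congr rfl fun j _ => (key j).symm
  conv_lhs => rw [fM_eq, Matrix.mul_smul, Finset.mul_sum, S, ← Finset.smul_sum]
  rw [fM_eq, smul_comm]

lemma wpow_mul_fM (hn : 2 ≤ n) (p : ℕ) (k : Fin n) :
    wM n ^ p * fM n k = ((omega n ^ (k : ℕ)) ^ p) • fM n k := by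
  induction p with
  | zero => simp
  | succ q ih =>
      rw [pow_succ, mul_assoc, w_mul_fM n hn, Matrix.mul_smul, ih, smul_smul, pow_succ]
      ring_nf

lemma fM_mul_fM (hn : 2 ≤ n) (k l : Fin n) :
    fM n k * fM n l = if k = l then fM n k else 0 := by
  have hω := omega_ne_zero n
  set ζk := omega n ^ (k : ℕ) with hζk
  set ζl := omega n ^ (l : ℕ) with hζl
  have hk0 : ζk ≠ 0 := pow_ne_zero _ hω
  have step : fM n k * fM n l
      = (n : ℂ)⁻¹ • ∑ j : Fin n, ((omega n ^ ((j : ℕ) * (k : ℕ)))⁻¹ * ζl ^ (j : ℕ)) • fM n l := by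
    conv_lhs => rw [fM]
    rw [Matrix.smul_mul, Finset.sum_mul]
    congr 1
    refine Finset.sum_congr rfl fun j _ => ?_
    rw [Matrix.smul_mul, wpow_mul_fM n hn, smul_smul]
  have coeff : ∀ j : Fin n, (omega n ^ ((j : ℕ) * (k : ℕ)))⁻¹ * ζl ^ (j : ℕ)
      = (ζl * ζk⁻¹) ^ (j : ℕ) := by
    intro j
    rw [mul_comm (j : ℕ) (k : ℕ), pow_mul, mul_pow, inv_pow]
    ring
  rw [step]
  simp only [coeff]
  rw [← Finset.sum_smul, sum_root]
  · have hiff : (ζl * ζk⁻¹ = 1) ↔ k = l := by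
      constructor
      · intro h
        have h2 : ζl = ζk := by
          field_simp at h
          exact h
        have := (omega_prim n).pow_inj l.isLt k.isLt h2
        exact (Fin.ext this).symm
      · intro h; subst h; field_simp
        exact hζl.trans hζk.symm
    by_cases hkl : k = l
    · rw [if_pos (hiff.mpr hkl), if_pos hkl, smul_smul,
        inv_mul_cancel₀ (by exact_mod_cast (NeZero.ne n) : (n : ℂ) ≠ 0)]
      subst hkl
      simp
    · rw [if_neg (fun h => hkl (hiff.mp h)), if_neg hkl]
      simp
  · simp [mul_pow, inv_pow, hζk, hζl, zeta_pow_n]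

lemma sum_fM : ∑ k : Fin n, fM n k = 1 := by
  have h1 : ∑ k : Fin n, fM n k
      = (n : ℂ)⁻¹ • ∑ j : Fin n, (∑ k : Fin n, ((omega n ^ (j : ℕ))⁻¹) ^ (k : ℕ)) • WW n j := by
    simp only [fM_eq, ← Finset.smul_sum]
    congr 1
    rw [Finset.sum_comm]
    refine Finset.sum_congr rfl fun j _ => ?_
    rw [← Finset.sum_smul]
    congr 1
    refine Finset.sum_congr rfl fun k _ => ?_
    rw [inv_pow, ← pow_mul, ← pow_mul, Nat.mul_comm]
  rw [h1]
  have h2 : ∀ j : Fin n, (∑ k : Fin n, ((omega n ^ (j : ℕ))⁻¹) ^ (k : ℕ))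
      = if j = 0 then (n : ℂ) else 0 := by
    intro j
    rw [sum_root n _ (by rw [inv_pow, zeta_pow_n]; simp)]
    have hiff : ((omega n ^ (j : ℕ))⁻¹ = 1) ↔ (j = 0) := by
      rw [inv_eq_one]
      constructor
      · intro h
        have := (omega_prim n).pow_inj j.isLt (Nat.pos_of_ne_zero (NeZero.ne n))
          (by simpa using h)
        exact Fin.ext (by simpa using this)
      · intro h; subst h; simp
    rw [if_congr hiff rfl rfl]
  simp only [h2, ite_smul, zero_smul]
  rw [Finset.sum_ite_eq' Finset.univ (0 : Fin n)]
  simp only [Finset.mem_univ, if_pos, WW_zero, smul_smul,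
    inv_mul_cancel₀ (by exact_mod_cast (NeZero.ne n) : (n : ℂ) ≠ 0), one_smul,
    smul_eq_mul]

lemma fM_conjT (k : Fin n) : (fM n k)ᴴ = fM n k := by
  set ζ := omega n ^ (k : ℕ) with hζ
  have hζn : ζ ^ n = 1 := zeta_pow_n n k
  have hζ0 : ζ ≠ 0 := pow_ne_zero _ (omega_ne_zero n)
  have hconj : ∀ j : Fin n, star ((ζ ^ (j : ℕ))⁻¹ : ℂ) = ζ ^ (j : ℕ) := by
    intro j
    have : star ((ζ ^ (j : ℕ))⁻¹ : ℂ) = (starRingEnd ℂ) ((ζ ^ (j : ℕ))⁻¹) := rfl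
    rw [this, map_inv₀, map_pow, hζ, map_pow, omega_conj, ← inv_pow, ← inv_pow, inv_inv]
  have hval : ∀ j : Fin n, ζ ^ (j : ℕ) = (ζ ^ ((-j : Fin n) : ℕ))⁻¹ := by
    intro j
    refine eq_inv_of_mul_eq_one_left ?_
    rw [← root_pow_val_add n ζ hζn j (-j)]
    simp
  conv_lhs => rw [fM_eq]
  conv_rhs => rw [fM_eq]
  rw [Matrix.conjTranspose_smul, Matrix.conjTranspose_sum]
  have hstar : star ((n : ℂ)⁻¹) = (n : ℂ)⁻¹ := by
    rw [star_inv₀, star_natCast]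
  rw [hstar]
  congr 1
  calc ∑ j : Fin n, ((ζ ^ (j : ℕ))⁻¹ • WW n j)ᴴ
      = ∑ j : Fin n, ζ ^ (j : ℕ) • WW n (-j) := by
        refine Finset.sum_congr rfl fun j _ => ?_
        rw [Matrix.conjTranspose_smul, WW_conjT, hconj]
    _ = ∑ j : Fin n, (ζ ^ (j : ℕ))⁻¹ • WW n j := by
        refine Fintype.sum_equiv (Equiv.neg (Fin n)) _ _ fun j => ?_
        simp only [Equiv.neg_apply]
        rw [hval j]

lemma commute_wpow_fM (p : ℕ) (k : Fin n) : Commute (wM n ^ p) (fM n k) := by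
  unfold fM
  refine Commute.smul_right ?_ _
  refine Commute.sum_right _ _ _ fun j _ => ?_
  exact Commute.smul_right (Commute.pow_pow (Commute.refl (wM n)) p _) _

lemma commute_fM_fM (k l : Fin n) : Commute (fM n k) (fM n l) := by
  conv_lhs => unfold fM
  refine Commute.smul_left ?_ _
  refine Commute.sum_left _ _ _ fun j _ => ?_
  exact Commute.smul_left (commute_wpow_fM n _ l) _

lemma wpow_conjT_mul (p : ℕ) : (wM n ^ p)ᴴ * wM n ^ p = 1 := by
  rw [wM_pow, WW_conjT, WW_mul, neg_add_cancel, WW_zero]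

lemma wpow_mul_conjT (p : ℕ) : wM n ^ p * (wM n ^ p)ᴴ = 1 := by
  rw [wM_pow, WW_conjT, WW_mul, add_neg_cancel, WW_zero]

variable (N : ℕ)

lemma tens_mul (A B : Fin N → Matrix (Fin n) (Fin n) ℂ) :
    tens n N A * tens n N B = tens n N fun k => A k * B k := by
  ext x y
  simp only [tens, Matrix.mul_apply, Matrix.of_apply]
  calc ∑ z : Fin N → Fin n, (∏ k, A k (x k) (z k)) * ∏ k, B k (z k) (y k)
      = ∑ z : Fin N → Fin n, ∏ k, (A k (x k) (z k) * B k (z k) (y k)) :=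
        Finset.sum_congr rfl fun z _ => (Finset.prod_mul_distrib).symm
    _ = ∏ k, ∑ c : Fin n, A k (x k) c * B k c (y k) := by
        rw [Finset.prod_univ_sum (fun _ => Finset.univ)
          (fun k c => A k (x k) c * B k c (y k)), Fintype.piFinset_univ]
    _ = ∏ k, (A k * B k) (x k) (y k) :=
        Finset.prod_congr rfl fun k _ => (Matrix.mul_apply).symm

lemma tens_one : tens n N (fun _ => 1) = 1 := by
  ext x y
  simp only [tens, Matrix.of_apply, Matrix.one_apply]
  by_cases h : x = y
  · subst h; simp
  · obtain ⟨k, hk⟩ := Function.ne_iff.mp h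
    rw [Finset.prod_eq_zero (Finset.mem_univ k) (by simp [Matrix.one_apply, hk]), if_neg h]

lemma tens_conjT (A : Fin N → Matrix (Fin n) (Fin n) ℂ) :
    (tens n N A)ᴴ = tens n N fun k => (A k)ᴴ := by
  ext x y
  simp only [Matrix.conjTranspose_apply, tens, Matrix.of_apply]
  rw [show (star (∏ k, A k (y k) (x k)) : ℂ)
    = (starRingEnd ℂ) (∏ k, A k (y k) (x k)) from rfl, map_prod]
  rfl

lemma tens_zero (A : Fin N → Matrix (Fin n) (Fin n) ℂ) (k0 : Fin N) (h : A k0 = 0) :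
    tens n N A = 0 := by
  ext x y
  simp only [tens, Matrix.of_apply, Matrix.zero_apply]
  exact Finset.prod_eq_zero (Finset.mem_univ k0) (by rw [h]; rfl)

lemma tens_sum_slot {ι : Type*} (t : Finset ι) (sl : Fin N)
    (A : Fin N → Matrix (Fin n) (Fin n) ℂ) (B : ι → Matrix (Fin n) (Fin n) ℂ) :
    ∑ i ∈ t, tens n N (Function.update A sl (B i))
      = tens n N (Function.update A sl (∑ i ∈ t, B i)) := by
  ext x y
  have key : ∀ C : Matrix (Fin n) (Fin n) ℂ,
      tens n N (Function.update A sl C) x y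
        = C (x sl) (y sl) * ∏ k ∈ Finset.univ \ {sl}, A k (x k) (y k) := by
    intro C
    have hg : ∀ k, (Function.update A sl C) k (x k) (y k)
        = Function.update (fun k => A k (x k) (y k)) sl (C (x sl) (y sl)) k := by
      intro k
      by_cases hk : k = sl
      · subst hk; simp
      · simp [Function.update_of_ne hk]
    show (∏ k, (Function.update A sl C) k (x k) (y k)) = _
    rw [Finset.prod_congr rfl fun k _ => hg k,
      Finset.prod_update_of_mem (Finset.mem_univ sl)]
  rw [Matrix.sum_apply]
  calc ∑ i ∈ t, tens n N (Function.update A sl (B i)) x y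
      = ∑ i ∈ t, (B i) (x sl) (y sl) * ∏ k ∈ Finset.univ \ {sl}, A k (x k) (y k) :=
        Finset.sum_congr rfl fun i _ => key (B i)
    _ = (∑ i ∈ t, B i) (x sl) (y sl) * ∏ k ∈ Finset.univ \ {sl}, A k (x k) (y k) := by
        rw [Matrix.sum_apply, Finset.sum_mul]
    _ = _ := (key _).symm

/-- two-slot elementary tensor -/
def DD (a b : Fin N) (P Q : Matrix (Fin n) (Fin n) ℂ) :
    Matrix (Fin N → Fin n) (Fin N → Fin n) ℂ :=
  tens n N fun k => if k = a then P else if k = b then Q else 1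

lemma DD_mul (a b : Fin N) (P Q P' Q' : Matrix (Fin n) (Fin n) ℂ) :
    DD n N a b P Q * DD n N a b P' Q' = DD n N a b (P * P') (Q * Q') := by
  unfold DD
  rw [tens_mul]
  refine congrArg (tens n N) ?_
  funext k
  split_ifs <;> simp

lemma DD_conjT (a b : Fin N) (P Q : Matrix (Fin n) (Fin n) ℂ) :
    (DD n N a b P Q)ᴴ = DD n N a b Pᴴ Qᴴ := by
  unfold DD
  rw [tens_conjT]
  refine congrArg (tens n N) ?_
  funext k
  split_ifs <;> simp

lemma DD_one (a b : Fin N) : DD n N a b 1 1 = 1 := by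
  have h : (fun k : Fin N => if k = a then (1 : Matrix (Fin n) (Fin n) ℂ)
      else if k = b then 1 else 1) = fun _ => 1 := by
    funext k; split_ifs <;> rfl
  rw [DD, h, tens_one]

lemma DD_zero (a b : Fin N) (hab : a ≠ b) (P : Matrix (Fin n) (Fin n) ℂ) :
    DD n N a b P 0 = 0 := by
  refine tens_zero n N _ b ?_
  simp [Ne.symm hab]

lemma DD_sum (a b : Fin N) (hab : a ≠ b) (P : Matrix (Fin n) (Fin n) ℂ)
    (B : Fin n → Matrix (Fin n) (Fin n) ℂ) :
    ∑ i : Fin n, DD n N a b P (B i) = DD n N a b P (∑ i : Fin n, B i) := by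
  have h : ∀ C : Matrix (Fin n) (Fin n) ℂ,
      (fun k : Fin N => if k = a then P else if k = b then C else 1)
        = Function.update (fun k : Fin N => if k = a then P else 1) b C := by
    intro C
    funext k
    by_cases hk : k = b
    · subst hk; simp [Ne.symm hab]
    · rw [Function.update_of_ne hk]
      simp [hk]
  unfold DD
  simp only [h]
  exact tens_sum_slot n N Finset.univ b _ B


lemma uM_eq (m s : ℕ) (hs1 : 1 ≤ s) (hs2 : s ≤ m) :
    uM n (m+1) s = ∑ i : Fin n,
      DD n (m+1) ⟨s-1, by omega⟩ ⟨s, by omega⟩ (wM n ^ (i : ℕ)) (fM n i) := by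
  refine Finset.sum_congr rfl fun i _ => ?_
  refine congrArg (tens n (m+1)) ?_
  funext k
  have h1 : ((k : ℕ) + 1 = s) ↔ (k = (⟨s-1, by omega⟩ : Fin (m+1))) := by
    rw [Fin.ext_iff]; simp only []; omega
  have h2 : ((k : ℕ) = s) ↔ (k = (⟨s, by omega⟩ : Fin (m+1))) := by
    rw [Fin.ext_iff]
  exact if_congr h1 rfl (if_congr h2 rfl rfl)

lemma hab_ne (m s : ℕ) (hs1 : 1 ≤ s) (hs2 : s ≤ m) :
    (⟨s-1, by omega⟩ : Fin (m+1)) ≠ ⟨s, by omega⟩ := by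
  simp only [ne_eq, Fin.ext_iff]
  omega

lemma uM_unitary (hn : 2 ≤ n) (m s : ℕ) (hs1 : 1 ≤ s) (hs2 : s ≤ m) :
    uM n (m+1) s * (uM n (m+1) s)ᴴ = 1 ∧ (uM n (m+1) s)ᴴ * uM n (m+1) s = 1 := by
  set a : Fin (m+1) := ⟨s-1, by omega⟩ with ha
  set b : Fin (m+1) := ⟨s, by omega⟩ with hb
  have hab : a ≠ b := hab_ne m s hs1 hs2
  rw [uM_eq n m s hs1 hs2, Matrix.conjTranspose_sum]
  simp only [DD_conjT, fM_conjT]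
  constructor
  · rw [Finset.sum_mul_sum]
    have inner : ∀ i : Fin n, ∑ j : Fin n,
        DD n (m+1) a b (wM n ^ (i : ℕ)) (fM n i)
          * DD n (m+1) a b ((wM n ^ (j : ℕ))ᴴ) (fM n j)
        = DD n (m+1) a b 1 (fM n i) := by
      intro i
      rw [Finset.sum_eq_single i]
      · rw [DD_mul, wpow_mul_conjT, fM_mul_fM n hn, if_pos rfl]
      · intro j _ hj
        rw [DD_mul, fM_mul_fM n hn, if_neg (fun h => hj h.symm), DD_zero n (m+1) a b hab]
      · intro h; exact absurd (Finset.mem_univ i) h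
    rw [Finset.sum_congr rfl fun i _ => inner i, DD_sum n (m+1) a b hab, sum_fM, DD_one]
  · rw [Finset.sum_mul_sum]
    have inner : ∀ i : Fin n, ∑ j : Fin n,
        DD n (m+1) a b ((wM n ^ (i : ℕ))ᴴ) (fM n i)
          * DD n (m+1) a b (wM n ^ (j : ℕ)) (fM n j)
        = DD n (m+1) a b 1 (fM n i) := by
      intro i
      rw [Finset.sum_eq_single i]
      · rw [DD_mul, wpow_conjT_mul, fM_mul_fM n hn, if_pos rfl]
      · intro j _ hj
        rw [DD_mul, fM_mul_fM n hn, if_neg (fun h => hj h.symm), DD_zero n (m+1) a b hab]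
      · intro h; exact absurd (Finset.mem_univ i) h
    rw [Finset.sum_congr rfl fun i _ => inner i, DD_sum n (m+1) a b hab, sum_fM, DD_one]

lemma uM_comm (N s t : ℕ) :
    uM n N s * uM n N t = uM n N t * uM n N s := by
  unfold uM
  rw [Finset.sum_mul_sum, Finset.sum_mul_sum]
  conv_rhs => rw [Finset.sum_comm]
  refine Finset.sum_congr rfl fun i _ => Finset.sum_congr rfl fun j _ => ?_
  rw [tens_mul, tens_mul]
  refine congrArg (tens n N) ?_
  funext k
  have hXc : (if (k : ℕ) + 1 = s then wM n ^ (i : ℕ) else if (k : ℕ) = s then fM n i else 1)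
      = wM n ^ (i : ℕ) ∨ (if (k : ℕ) + 1 = s then wM n ^ (i : ℕ) else if (k : ℕ) = s then fM n i else 1) = fM n i
      ∨ (if (k : ℕ) + 1 = s then wM n ^ (i : ℕ) else if (k : ℕ) = s then fM n i else 1) = 1 := by
    split_ifs <;> simp
  have hYc : (if (k : ℕ) + 1 = t then wM n ^ (j : ℕ) else if (k : ℕ) = t then fM n j else 1)
      = wM n ^ (j : ℕ) ∨ (if (k : ℕ) + 1 = t then wM n ^ (j : ℕ) else if (k : ℕ) = t then fM n j else 1) = fM n j
      ∨ (if (k : ℕ) + 1 = t then wM n ^ (j : ℕ) else if (k : ℕ) = t then fM n j else 1) = 1 := by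
    split_ifs <;> simp
  rcases hXc with h | h | h <;> rcases hYc with h' | h' | h' <;> rw [h, h']
  · exact ((Commute.refl (wM n)).pow_pow _ _).eq
  · exact (commute_wpow_fM n _ _).eq
  · exact (Commute.one_right _).eq
  · exact ((commute_wpow_fM n _ _).symm).eq
  · exact (commute_fM_fM n _ _).eq
  · exact (Commute.one_right _).eq
  · exact (Commute.one_left _).eq
  · exact (Commute.one_left _).eq

lemma uM_pow_succ (hn : 2 ≤ n) (m s : ℕ) (hs1 : 1 ≤ s) (hs2 : s ≤ m) (p : ℕ) :
    uM n (m+1) s ^ (p+1) = ∑ i : Fin n,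
      DD n (m+1) ⟨s-1, by omega⟩ ⟨s, by omega⟩ (wM n ^ ((i : ℕ) * (p+1))) (fM n i) := by
  set a : Fin (m+1) := ⟨s-1, by omega⟩ with ha
  set b : Fin (m+1) := ⟨s, by omega⟩ with hb
  have hab : a ≠ b := hab_ne m s hs1 hs2
  induction p with
  | zero =>
      rw [pow_one, uM_eq n m s hs1 hs2]
      simp
      rfl
  | succ q ih =>
      rw [pow_succ, ih, uM_eq n m s hs1 hs2, Finset.sum_mul_sum]
      refine Finset.sum_congr rfl fun i _ => ?_
      rw [Finset.sum_eq_single i]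
      · rw [DD_mul, ← pow_add, fM_mul_fM n hn, if_pos rfl,
          show (i:ℕ)*(q+1)+(i:ℕ) = (i:ℕ)*(q+1+1) from by ring]
      · intro j _ hj
        rw [DD_mul, fM_mul_fM n hn, if_neg (fun h => hj h.symm), DD_zero n (m+1) a b hab]
      · intro h; exact absurd (Finset.mem_univ i) h

lemma uM_pow_n (hn : 2 ≤ n) (m s : ℕ) (hs1 : 1 ≤ s) (hs2 : s ≤ m) :
    uM n (m+1) s ^ n = 1 := by
  have hn1 : n - 1 + 1 = n := by omega
  have h := uM_pow_succ n hn m s hs1 hs2 (n - 1)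
  rw [hn1] at h
  rw [h]
  have hw : ∀ i : Fin n, wM n ^ ((i : ℕ) * n) = 1 := by
    intro i
    rw [mul_comm, pow_mul, wM_pow]
    simp [WW_zero]
  have hab : (⟨s-1, by omega⟩ : Fin (m+1)) ≠ ⟨s, by omega⟩ := hab_ne m s hs1 hs2
  calc ∑ i : Fin n, DD n (m+1) _ _ (wM n ^ ((i : ℕ) * n)) (fM n i)
      = ∑ i : Fin n, DD n (m+1) ⟨s-1, by omega⟩ ⟨s, by omega⟩ 1 (fM n i) :=
        Finset.sum_congr rfl fun i _ => by rw [hw i]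
    _ = 1 := by rw [DD_sum n (m+1) _ _ hab, sum_fM, DD_one]

end S13

theorem statement13 (n : ℕ) [NeZero n] (hn : 2 ≤ n) (m : ℕ) :
    (∀ s : ℕ, 1 ≤ s → s ≤ m →
        uM n (m + 1) s * (uM n (m + 1) s)ᴴ = 1 ∧ (uM n (m + 1) s)ᴴ * uM n (m + 1) s = 1) ∧
      (∀ s t : ℕ, 1 ≤ s → s ≤ m → 1 ≤ t → t ≤ m →
        uM n (m + 1) s * uM n (m + 1) t = uM n (m + 1) t * uM n (m + 1) s) ∧
      (∀ s : ℕ, 1 ≤ s → s ≤ m → uM n (m + 1) s ^ n = 1) :=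
  ⟨fun s hs1 hs2 => S13.uM_unitary n hn m s hs1 hs2,
   fun s t _ _ _ _ => S13.uM_comm n (m+1) s t,
   fun s hs1 hs2 => S13.uM_pow_n n hn m s hs1 hs2⟩
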